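/- arXiv:2504.17868 — 3 statements merged into one kernel-verified Lean document; each statement's English description precedes it below -/
import Mathlib

section
/- For every integer Δ ≥ 0, there exists a rooted tree T with a partial edge coloring such that: (a) for every leaf v of T there is a color c_v such that, after deleting all edges of color c_v, v is the only leaf that remains connected to the root; (b) every color appears on at most Δ edges; (c) T has exactly 2^Δ leaves; (d) T has exactly Δ·2^Δ edges. -/
/-- A finite rooted tree with a partial edge coloring: `col v` is the color (if any) of
the edge joining `v` to its parent, for `v ≠ root`. -/
structure RCTree (C : Type) where
  V : Type
  fin : Fintype V
  root : V
  parent : V → V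
  depth : V → ℕ
  col : V → Option C
  parent_root : parent root = root
  depth_root : depth root = 0
  depth_eq_zero : ∀ v, depth v = 0 → v = root
  depth_parent : ∀ v, v ≠ root → depth (parent v) + 1 = depth v

namespace RCTree

variable {C : Type} (T : RCTree C)

/-- A leaf: a vertex with no children. -/
def IsLeaf (v : T.V) : Prop := ∀ u : T.V, u ≠ T.root → T.parent u ≠ v

/-- `v` remains connected to the root after deleting all edges of color `c`:
no edge on the root-to-`v` path has color `c`. -/
def Survives (c : C) (v : T.V) : Prop :=
  ∀ k : ℕ, k < T.depth v → T.col (T.parent^[k] v) ≠ some c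

end RCTree

namespace BLBaux

/-- value of `L` bits -/
def bval : ℕ → (ℕ → Bool) → ℕ
  | 0, _ => 0
  | L+1, b => (if b 0 then 1 else 0) + 2 * bval L (fun j => b (j+1))

lemma bval_lt (L : ℕ) (b : ℕ → Bool) : bval L b < 2 ^ L := by
  induction L generalizing b with
  | zero => simp [bval]
  | succ L ih =>
    have := ih (fun j => b (j+1))
    simp only [bval, pow_succ]
    split <;> omega

lemma bval_congr (L : ℕ) (b b' : ℕ → Bool) (h : ∀ j < L, b j = b' j) :
    bval L b = bval L b' := by
  induction L generalizing b b' with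
  | zero => rfl
  | succ L ih =>
    simp only [bval, h 0 (by omega)]
    rw [ih _ _ fun j hj => h (j+1) (by omega)]

lemma testBit_bval (L : ℕ) (b : ℕ → Bool) (j : ℕ) (hj : j < L) :
    (bval L b).testBit j = b j := by
  induction L generalizing b j with
  | zero => omega
  | succ L ih =>
    cases j with
    | zero =>
      have h2 : (bval (L+1) b) % 2 = if b 0 then 1 else 0 := by
        have := bval_lt L (fun j => b (j+1))
        simp only [bval]
        rcases b 0 <;> simp [Nat.add_mul_mod_self_left] <;> omega
      rw [Nat.testBit_zero, h2]
      rcases b 0 <;> simp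
    | succ j =>
      have h2 : (bval (L+1) b) / 2 = bval L (fun i => b (i+1)) := by
        simp only [bval]
        rcases b 0 <;> simp <;> omega
      rw [Nat.testBit_succ, h2, ih _ _ (by omega)]

lemma bval_testBit (L m : ℕ) (hm : m < 2 ^ L) : bval L m.testBit = m := by
  induction L generalizing m with
  | zero => simp [bval]; omega
  | succ L ih =>
    have h1 : (fun j => m.testBit (j+1)) = (m/2).testBit := by
      funext j; exact Nat.testBit_succ m j
    have h2 : m / 2 < 2 ^ L := by
      rw [pow_succ] at hm; omega
    have h0 : m.testBit 0 = decide (m % 2 = 1) := Nat.testBit_zero m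
    simp only [bval, h1, ih _ h2, h0]
    rcases Nat.mod_two_eq_zero_or_one m with h | h <;> simp [h] <;> omega

lemma bval_eq_zero (L : ℕ) (b : ℕ → Bool) (h : bval L b = 0) :
    ∀ j < L, b j = false := by
  intro j hj
  have := testBit_bval L b j hj
  rw [h] at this
  simpa [Nat.zero_testBit] using this.symm

variable (Δ : ℕ)

def ext (g : Fin Δ → Bool) : ℕ → Bool := fun n => if h : n < Δ then g ⟨n, h⟩ else false

/-- the numeric value of the suffix bits (those above position `k`) -/
def nv (k : ℕ) (g : Fin Δ → Bool) : ℕ := bval (Δ - 1 - k) (fun j => ext Δ g (k + 1 + j))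

/-- replace the suffix bits with the binary digits of `m` -/
def setSuf (k : ℕ) (g : Fin Δ → Bool) (m : ℕ) : Fin Δ → Bool :=
  fun i => if (i : ℕ) ≤ k then g i else m.testBit ((i : ℕ) - k - 1)

lemma nv_lt (k : ℕ) (g : Fin Δ → Bool) : nv Δ k g < 2 ^ (Δ - 1 - k) := bval_lt _ _

lemma setSuf_le {k : ℕ} (g : Fin Δ → Bool) (m : ℕ) (i : Fin Δ) (hi : (i:ℕ) ≤ k) :
    setSuf Δ k g m i = g i := by simp [setSuf, hi]

lemma nv_setSuf {k : ℕ} (hk : k < Δ) (g : Fin Δ → Bool) {m : ℕ} (hm : m < 2 ^ (Δ - 1 - k)) :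
    nv Δ k (setSuf Δ k g m) = m := by
  unfold nv
  rw [bval_congr _ _ m.testBit ?_]
  · exact bval_testBit _ _ hm
  · intro j hj
    have hlt : k + 1 + j < Δ := by omega
    have h2 : (k + 1 + j) - k - 1 = j := by omega
    have h3 : ¬ (k + 1 + j ≤ k) := by omega
    simp [ext, hlt, setSuf, h2, h3]

lemma setSuf_congr {k : ℕ} (g g' : Fin Δ → Bool) (m : ℕ)
    (h : ∀ i : Fin Δ, (i:ℕ) ≤ k → g i = g' i) : setSuf Δ k g m = setSuf Δ k g' m := by
  funext i
  by_cases hi : (i:ℕ) ≤ k <;> simp [setSuf, hi, h]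

lemma setSuf_nv {k : ℕ} (hk : k < Δ) (g : Fin Δ → Bool) : setSuf Δ k g (nv Δ k g) = g := by
  funext i
  by_cases hi : (i:ℕ) ≤ k
  · simp [setSuf, hi]
  · simp only [setSuf, hi, if_neg, not_false_iff]
    unfold nv
    rw [testBit_bval _ _ _ (by omega)]
    have h1 : k + 1 + ((i:ℕ) - k - 1) = (i:ℕ) := by omega
    simp [ext, h1, i.isLt]

lemma nv_eq_zero {k : ℕ} (hk : k < Δ) (g : Fin Δ → Bool) (h : nv Δ k g = 0) :
    ∀ i : Fin Δ, k < (i:ℕ) → g i = false := by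
  intro i hi
  have := bval_eq_zero _ _ h ((i:ℕ) - k - 1) (by omega)
  have h1 : k + 1 + ((i:ℕ) - k - 1) = (i:ℕ) := by omega
  simpa [ext, h1, i.isLt] using this

lemma bval_zero (L : ℕ) : bval L (fun _ => false) = 0 := by
  induction L with
  | zero => rfl
  | succ L ih => simpa [bval] using ih

variable (Δ : ℕ)

abbrev Vt := Option (Fin Δ × (Fin Δ → Bool))

def par : Vt Δ → Vt Δ
  | none => none
  | some (k, g) =>
    if nv Δ (k:ℕ) g + 1 < 2 ^ (Δ - 1 - (k:ℕ)) then some (k, setSuf Δ (k:ℕ) g (nv Δ (k:ℕ) g + 1))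
    else if (k:ℕ) = 0 then none
    else some (⟨(k:ℕ) - 1, lt_of_le_of_lt (Nat.sub_le _ _) k.isLt⟩,
      fun i => if (i:ℕ) < (k:ℕ) then g i else false)

def dep : Vt Δ → ℕ
  | none => 0
  | some (k, g) => 2 ^ Δ - 2 ^ (Δ - 1 - (k:ℕ)) - nv Δ (k:ℕ) g

def colf : Vt Δ → Option (Fin Δ → Bool)
  | none => none
  | some (k, g) => some (fun i => if i = k then !(g i) else g i)

lemma two_pow_le (k : Fin Δ) : 2 ^ (Δ - 1 - (k:ℕ)) * 2 ≤ 2 ^ Δ := by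
  have h1 : Δ - 1 - (k:ℕ) + 1 ≤ Δ := by have := k.isLt; omega
  calc 2 ^ (Δ - 1 - (k:ℕ)) * 2 = 2 ^ (Δ - 1 - (k:ℕ) + 1) := (pow_succ 2 _).symm
    _ ≤ 2 ^ Δ := Nat.pow_le_pow_right (by norm_num) h1

lemma dep_pos (k : Fin Δ) (g : Fin Δ → Bool) : 1 ≤ dep Δ (some (k, g)) := by
  have h1 := nv_lt Δ (k:ℕ) g
  have h2 := two_pow_le Δ k
  simp only [dep]
  omega

lemma dep_par (k : Fin Δ) (g : Fin Δ → Bool) :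
    dep Δ (par Δ (some (k, g))) + 1 = dep Δ (some (k, g)) := by
  have hk := k.isLt
  have h1 := nv_lt Δ (k:ℕ) g
  have h2 := two_pow_le Δ k
  by_cases hc : nv Δ (k:ℕ) g + 1 < 2 ^ (Δ - 1 - (k:ℕ))
  · simp only [par, dep, if_pos hc]
    rw [nv_setSuf Δ hk g hc]
    omega
  · by_cases hk0 : (k:ℕ) = 0
    · have hΔ : 2 ^ Δ = 2 ^ (Δ - 1 - (k:ℕ)) * 2 := by
        rw [← pow_succ]
        congr 1
        omega
      simp only [par, if_neg hc, if_pos hk0, dep]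
      omega
    · have e1 : Δ - 1 - ((k:ℕ) - 1) = (Δ - 1 - (k:ℕ)) + 1 := by omega
      have hz : nv Δ ((k:ℕ) - 1) (fun i => if (i:ℕ) < (k:ℕ) then g i else false) = 0 := by
        unfold nv
        rw [bval_congr _ _ (fun _ => false) ?_]
        · exact bval_zero _
        · intro j hj
          have hlt : (k:ℕ) - 1 + 1 + j < Δ := by omega
          have : ¬ ((k:ℕ) - 1 + 1 + j < (k:ℕ)) := by omega
          simp [ext, hlt, this]
      simp only [par, dep, if_neg hc, if_neg hk0]
      rw [hz, e1, pow_succ]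
      omega

lemma par_ne_leaf (hD : 1 ≤ Δ) (f : Fin Δ → Bool) (u : Vt Δ) (hu : u ≠ none) :
    par Δ u ≠ some (⟨Δ - 1, by omega⟩, f) := by
  match u with
  | none => exact absurd rfl hu
  | some (k, g) =>
    by_cases hc : nv Δ (k:ℕ) g + 1 < 2 ^ (Δ - 1 - (k:ℕ))
    · simp only [par, if_pos hc, ne_eq, Option.some.injEq, Prod.mk.injEq, not_and]
      intro hkk
      exfalso
      have hk : (k:ℕ) = Δ - 1 := congrArg Fin.val hkk
      have e : Δ - 1 - (k:ℕ) = 0 := by omega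
      rw [e, pow_zero] at hc
      omega
    · by_cases hk0 : (k:ℕ) = 0
      · simp only [par, if_neg hc, if_pos hk0, ne_eq]
        exact fun h => by cases h
      · simp only [par, if_neg hc, if_neg hk0, ne_eq, Option.some.injEq, Prod.mk.injEq, not_and]
        intro hkk
        exfalso
        have hk : (k:ℕ) - 1 = Δ - 1 := congrArg Fin.val hkk
        have := k.isLt
        omega

lemma leaf_eq (hD : 1 ≤ Δ) (v : Vt Δ) (hv : ∀ u : Vt Δ, u ≠ none → par Δ u ≠ v) :
    ∃ f : Fin Δ → Bool, v = some (⟨Δ - 1, by omega⟩, f) := by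
  match v with
  | none =>
    exfalso
    have h1 : 1 ≤ 2 ^ (Δ - 1) := Nat.one_le_two_pow
    have hm : 2 ^ (Δ - 1) - 1 < 2 ^ (Δ - 1 - 0) := by simp only [Nat.sub_zero]; omega
    refine hv (some (⟨0, by omega⟩, setSuf Δ 0 (fun _ => false) (2 ^ (Δ - 1) - 1)))
      (by simp) ?_
    have hnv : nv Δ 0 (setSuf Δ 0 (fun _ => false) (2 ^ (Δ - 1) - 1)) = 2 ^ (Δ - 1) - 1 :=
      nv_setSuf Δ (by omega) _ hm
    simp only [par, Fin.val_mk, hnv]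
    rw [if_neg (by simp only [Nat.sub_zero]; omega)]
    simp
  | some (k, g) =>
    by_cases hk : (k:ℕ) = Δ - 1
    · exact ⟨g, by rw [show k = ⟨Δ - 1, by omega⟩ from Fin.ext hk]⟩
    · exfalso
      have hkΔ := k.isLt
      have hk' : (k:ℕ) < Δ - 1 := by omega
      by_cases hn : 0 < nv Δ (k:ℕ) g
      · set m := nv Δ (k:ℕ) g - 1 with hm
        have hnl := nv_lt Δ (k:ℕ) g
        have hmlt : m < 2 ^ (Δ - 1 - (k:ℕ)) := by omega
        refine hv (some (k, setSuf Δ (k:ℕ) g m)) (by simp) ?_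
        have hnv : nv Δ (k:ℕ) (setSuf Δ (k:ℕ) g m) = m := nv_setSuf Δ (by omega) _ hmlt
        have hmm : m + 1 < 2 ^ (Δ - 1 - (k:ℕ)) := by omega
        have hss : setSuf Δ (k:ℕ) (setSuf Δ (k:ℕ) g m) (m + 1) = g := by
          rw [setSuf_congr Δ (setSuf Δ (k:ℕ) g m) g _ (fun i hi => setSuf_le Δ g m i hi),
            show m + 1 = nv Δ (k:ℕ) g by omega, setSuf_nv Δ (by omega) g]
        simp only [par, hnv, if_pos hmm, hss]
      · have hz : nv Δ (k:ℕ) g = 0 := by omega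
        have h1 : 1 ≤ 2 ^ (Δ - 1 - ((k:ℕ)+1)) := Nat.one_le_two_pow
        set m := 2 ^ (Δ - 1 - ((k:ℕ)+1)) - 1 with hm
        have hmlt : m < 2 ^ (Δ - 1 - ((k:ℕ)+1)) := by omega
        set g2 := setSuf Δ ((k:ℕ)+1) g m with hg2
        refine hv (some (⟨(k:ℕ)+1, by omega⟩, g2)) (by simp) ?_
        have hnv : nv Δ ((k:ℕ)+1) g2 = m := nv_setSuf Δ (by omega) _ hmlt
        simp only [par, Fin.val_mk, hnv]
        rw [if_neg (by omega), if_neg (by omega)]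
        simp only [Option.some.injEq, Prod.mk.injEq]
        refine ⟨Fin.ext (by simp), funext fun i => ?_⟩
        by_cases hik : (i:ℕ) < (k:ℕ)+1
        · rw [if_pos hik, hg2, setSuf_le Δ g m i (by omega)]
        · rw [if_neg hik]
          exact (nv_eq_zero Δ (by omega) g hz i (by omega)).symm

lemma dep_iterate (j : ℕ) (x : Vt Δ) (h : (par Δ)^[j] x ≠ none) :
    dep Δ ((par Δ)^[j] x) + j = dep Δ x := by
  induction j with
  | zero => simp
  | succ j ih =>
    rw [Function.iterate_succ_apply'] at h ⊢
    have hne : (par Δ)^[j] x ≠ none := by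
      intro hh
      rw [hh] at h
      exact h rfl
    match hx : (par Δ)^[j] x with
    | none => exact absurd hx hne
    | some (k, g) =>
      rw [hx] at ih
      have h2 := dep_par Δ k g
      have h3 := ih (by simp)
      omega

def Agrees (f : Fin Δ → Bool) : Vt Δ → Prop
  | none => True
  | some (k, g) => ∀ i : Fin Δ, (i:ℕ) ≤ (k:ℕ) → g i = f i

lemma agrees_par (f : Fin Δ → Bool) (x : Vt Δ) (h : Agrees Δ f x) : Agrees Δ f (par Δ x) := by
  match x with
  | none => trivial
  | some (k, g) =>
    by_cases hc : nv Δ (k:ℕ) g + 1 < 2 ^ (Δ - 1 - (k:ℕ))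
    · simp only [par, if_pos hc]
      intro i hi
      rw [setSuf_le Δ g _ i hi]
      exact h i hi
    · by_cases hk0 : (k:ℕ) = 0
      · simp only [par, if_neg hc, if_pos hk0]
        trivial
      · simp only [par, if_neg hc, if_neg hk0]
        intro i hi
        simp only [Fin.val_mk] at hi
        show (if (i:ℕ) < (k:ℕ) then g i else false) = f i
        have hik : (i:ℕ) < (k:ℕ) := by omega
        rw [if_pos hik]
        exact h i (by omega)

lemma agrees_iterate (f : Fin Δ → Bool) (x : Vt Δ) (h : Agrees Δ f x) (j : ℕ) :
    Agrees Δ f ((par Δ)^[j] x) := by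
  induction j with
  | zero => exact h
  | succ j ih => rw [Function.iterate_succ_apply']; exact agrees_par Δ f _ ih

lemma colf_ne (f : Fin Δ → Bool) (x : Vt Δ) (h : Agrees Δ f x) : colf Δ x ≠ some f := by
  match x with
  | none => simp [colf]
  | some (k, g) =>
    simp only [colf, ne_eq, Option.some.injEq]
    intro he
    have h1 : (fun i => if i = k then !(g i) else g i) k = f k := congrFun he k
    simp only [if_pos rfl] at h1
    have h2 : g k = f k := h k le_rfl
    rw [h2] at h1
    exact Bool.not_ne_self _ h1

lemma path_reach (hD : 1 ≤ Δ) (f : Fin Δ → Bool) (k : ℕ) (hk : k < Δ) (g : Fin Δ → Bool)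
    (hg : ∀ i : Fin Δ, (i:ℕ) ≤ k → g i = f i) :
    ∃ j, (par Δ)^[j] (some (⟨Δ - 1, by omega⟩, f)) = some (⟨k, hk⟩, g) := by
  have H : ∀ t k (hk : k < Δ) (g : Fin Δ → Bool), 2 ^ (Δ - 1 - k) + nv Δ k g ≤ t →
      (∀ i : Fin Δ, (i:ℕ) ≤ k → g i = f i) →
      ∃ j, (par Δ)^[j] (some (⟨Δ - 1, by omega⟩, f)) = some (⟨k, hk⟩, g) := by
    intro t
    induction t with
    | zero =>
      intro k hk g ht _
      have : 1 ≤ 2 ^ (Δ - 1 - k) := Nat.one_le_two_pow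
      omega
    | succ t ih =>
      intro k hk g ht hg
      by_cases hkD : k = Δ - 1
      · -- base : g = f
        subst hkD
        have hgf : g = f := by
          funext i
          exact hg i (by have := i.isLt; omega)
        exact ⟨0, by simp [hgf]⟩
      · have hk' : k < Δ - 1 := by omega
        by_cases hn : 0 < nv Δ k g
        · set m := nv Δ k g - 1 with hm
          have hnl := nv_lt Δ k g
          have hmlt : m < 2 ^ (Δ - 1 - k) := by omega
          set g' := setSuf Δ k g m with hg'
          have hnv' : nv Δ k g' = m := nv_setSuf Δ hk g hmlt
          obtain ⟨j, hj⟩ := ih k hk g' (by rw [hnv']; omega)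
            (fun i hi => by rw [hg', setSuf_le Δ g m i hi]; exact hg i hi)
          refine ⟨j + 1, ?_⟩
          rw [Function.iterate_succ_apply', hj]
          have hmm : m + 1 < 2 ^ (Δ - 1 - k) := by omega
          have hss : setSuf Δ k g' (m + 1) = g := by
            rw [hg', setSuf_congr Δ (setSuf Δ k g m) g _ (fun i hi => setSuf_le Δ g m i hi),
              show m + 1 = nv Δ k g by omega, setSuf_nv Δ hk g]
          simp only [par, Fin.val_mk, hnv', if_pos hmm, hss]
        · have hz : nv Δ k g = 0 := by omega
          have e1 : Δ - 1 - (k + 1) + 1 = Δ - 1 - k := by omega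
          have h1 : 1 ≤ 2 ^ (Δ - 1 - (k+1)) := Nat.one_le_two_pow
          set m := 2 ^ (Δ - 1 - (k+1)) - 1 with hm
          have hmlt : m < 2 ^ (Δ - 1 - (k+1)) := by omega
          set g2 := setSuf Δ (k+1) (fun i => if (i:ℕ) ≤ k then g i else f i) m with hg2
          have hnv2 : nv Δ (k+1) g2 = m := nv_setSuf Δ (by omega) _ hmlt
          have hbound : 2 ^ (Δ - 1 - (k+1)) + nv Δ (k+1) g2 ≤ t := by
            rw [hnv2]
            have : 2 ^ (Δ - 1 - (k+1)) * 2 = 2 ^ (Δ - 1 - k) := by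
              rw [← pow_succ, e1]
            omega
          have hag2 : ∀ i : Fin Δ, (i:ℕ) ≤ k + 1 → g2 i = f i := by
            intro i hi
            rw [hg2, setSuf_le Δ _ m i hi]
            by_cases hik : (i:ℕ) ≤ k
            · rw [if_pos hik]; exact hg i hik
            · rw [if_neg hik]
          obtain ⟨j, hj⟩ := ih (k+1) (by omega) g2 hbound hag2
          refine ⟨j + 1, ?_⟩
          rw [Function.iterate_succ_apply', hj]
          simp only [par, Fin.val_mk, hnv2]
          rw [if_neg (by omega), if_neg (by omega)]
          simp only [Option.some.injEq, Prod.mk.injEq]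
          refine ⟨Fin.ext (by simp), funext fun i => ?_⟩
          by_cases hik : (i:ℕ) < k + 1
          · rw [if_pos hik, hg2, setSuf_le Δ _ m i (by omega), if_pos (by omega : (i:ℕ) ≤ k)]
          · rw [if_neg hik]
            exact (nv_eq_zero Δ hk g hz i (by omega)).symm
  exact H (2 ^ (Δ - 1 - k) + nv Δ k g) k hk g le_rfl hg

end BLBaux


namespace BLBaux

def Tr (Δ : ℕ) : RCTree (Fin Δ → Bool) where
  V := Vt Δ
  fin := inferInstance
  root := none
  parent := par Δ
  depth := dep Δ
  col := colf Δ
  parent_root := rfl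
  depth_root := rfl
  depth_eq_zero := by
    intro v hv
    match v with
    | none => rfl
    | some (k, g) =>
      exfalso
      have := dep_pos Δ k g
      omega
  depth_parent := by
    intro v hv
    match v with
    | none => exact absurd rfl hv
    | some (k, g) => exact dep_par Δ k g

end BLBaux


/-- for every `Δ ≥ 0` there is a rooted, partially edge-colored tree such
that: (a) for each leaf `v` there is a color `c_v` whose deletion disconnects every leaf
except `v` from the root; (b) each color appears on at most `Δ` edges; (c) there are
exactly `2^Δ` leaves; (d) there are exactly `Δ·2^Δ` edges. -/
theorem exists_binary_lower_bound_tree (Δ : ℕ) :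
    ∃ (C : Type) (T : RCTree C),
      (∀ v : T.V, T.IsLeaf v → ∃ c : C,
        T.Survives c v ∧
        ∀ v' : T.V, T.IsLeaf v' → T.Survives c v' → v' = v) ∧
      (∀ c : C, {v : T.V | v ≠ T.root ∧ T.col v = some c}.ncard ≤ Δ) ∧
      {v : T.V | T.IsLeaf v}.ncard = 2 ^ Δ ∧
      {v : T.V | v ≠ T.root}.ncard = Δ * 2 ^ Δ := by
  classical
  open BLBaux in
  refine ⟨Fin Δ → Bool, Tr Δ, ?_, ?_, ?_, ?_⟩
  · -- (a)
    intro v hv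
    by_cases hD : 1 ≤ Δ
    · obtain ⟨f, rfl⟩ := leaf_eq Δ hD v hv
      refine ⟨f, ?_, ?_⟩
      · intro j hj
        exact colf_ne Δ f _ (agrees_iterate Δ f (some (⟨Δ - 1, by omega⟩, f))
          (show Agrees Δ f (some (⟨Δ - 1, by omega⟩, f)) from fun i _ => rfl) j)
      · intro v' hleaf' hsurv'
        obtain ⟨f', rfl⟩ := leaf_eq Δ hD v' hleaf'
        suffices hff : f' = f by rw [hff]
        by_contra hne
        obtain ⟨i0, hi0⟩ := Function.ne_iff.mp hne
        have hex : ∃ n, ∃ h : n < Δ, f' ⟨n, h⟩ ≠ f ⟨n, h⟩ := ⟨i0, i0.isLt, hi0⟩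
        set k := Nat.find hex with hkdef
        obtain ⟨hk, hne_k⟩ := Nat.find_spec hex
        have hmin : ∀ i : Fin Δ, (i : ℕ) < k → f' i = f i := by
          intro i hi
          by_contra hne_i
          exact Nat.find_min hex hi ⟨i.isLt, by simpa using hne_i⟩
        set g := setSuf Δ k f' (nv Δ k f) with hgdef
        have hag : ∀ i : Fin Δ, (i : ℕ) ≤ k → g i = f' i := fun i hi => setSuf_le Δ f' _ i hi
        obtain ⟨j, hj⟩ := path_reach Δ hD f' k hk g hag
        have hne2 : (par Δ)^[j] (some (⟨Δ - 1, by omega⟩, f')) ≠ none := by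
          rw [hj]; simp
        have hdep := dep_iterate Δ j _ hne2
        rw [hj] at hdep
        have hpos := dep_pos Δ ⟨k, hk⟩ g
        have hjlt : j < dep Δ (some (⟨Δ - 1, by omega⟩, f')) := by omega
        refine hsurv' j hjlt ?_
        show colf Δ ((par Δ)^[j] (some (⟨Δ - 1, by omega⟩, f'))) = some f
        rw [hj]
        simp only [colf, Option.some.injEq]
        funext i
        by_cases hik : i = (⟨k, hk⟩ : Fin Δ)
        · rw [if_pos hik]
          have h1 : g i = f' i := hag i (by rw [hik])
          have h2 : f' i ≠ f i := by rw [hik]; exact hne_k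
          rw [h1]
          revert h2
          cases f' i <;> cases f i <;> simp
        · rw [if_neg hik]
          have hikk : (i : ℕ) ≠ k := fun h => hik (Fin.ext h)
          by_cases hlt : (i : ℕ) < k
          · rw [hag i (by omega)]
            exact hmin i hlt
          · have hgt : k < (i : ℕ) := by omega
            have h4 : g i = setSuf Δ k f (nv Δ k f) i := by
              simp only [hgdef, setSuf, if_neg (by omega : ¬ (i : ℕ) ≤ k)]
            rw [h4, setSuf_nv Δ hk f]
    · -- Δ = 0
      have hΔ0 : Δ = 0 := by omega
      have hall : ∀ w : Vt Δ, w = none := by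
        intro w
        match w with
        | none => rfl
        | some (k, _) => exact absurd k.isLt (by omega)
      refine ⟨fun _ => false, ?_, ?_⟩
      · intro j hj
        exfalso
        have hv0 : v = none := hall v
        rw [hv0] at hj
        have h0 : (Tr Δ).depth (none : Vt Δ) = 0 := rfl
        omega
      · intro v' _ _
        rw [hall v', hall v]
  · -- (b)
    intro c
    have hsub : {v : Vt Δ | v ≠ none ∧ colf Δ v = some c} ⊆
        Set.range (fun k : Fin Δ => (some (k, fun i => if i = k then !(c i) else c i) : Vt Δ)) := by
      rintro v ⟨hv, hcol⟩
      match v with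
      | none => exact absurd rfl hv
      | some (k, g) =>
        refine ⟨k, ?_⟩
        simp only [Option.some.injEq, Prod.mk.injEq]
        refine ⟨trivial, funext fun i => ?_⟩
        have he : (fun i => if i = k then !(g i) else g i) = c := by
          simpa [colf] using hcol
        have hei := congrFun he i
        by_cases hik : i = k
        · rw [if_pos hik]
          rw [if_pos hik] at hei
          rw [← hei]
          cases g i <;> simp
        · rw [if_neg hik]
          rw [if_neg hik] at hei
          exact hei.symm
    have hinj : Function.Injective
        (fun k : Fin Δ => (some (k, fun i => if i = k then !(c i) else c i) : Vt Δ)) := by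
      intro a b h
      exact congrArg Prod.fst ((Option.some.injEq _ _).mp h)
    calc {v : (Tr Δ).V | v ≠ (Tr Δ).root ∧ (Tr Δ).col v = some c}.ncard
        ≤ (Set.range (fun k : Fin Δ =>
            (some (k, fun i => if i = k then !(c i) else c i) : Vt Δ))).ncard :=
          Set.ncard_le_ncard hsub (Set.finite_range _)
      _ = Nat.card (Fin Δ) := by
          rw [← Nat.card_coe_set_eq, Nat.card_range_of_injective hinj]
      _ = Δ := by simp
  · -- (c)
    by_cases hD : 1 ≤ Δ
    · have hinj : Function.Injective
          (fun f : Fin Δ → Bool => (some (⟨Δ - 1, by omega⟩, f) : Vt Δ)) := by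
        intro a b h
        exact congrArg Prod.snd ((Option.some.injEq _ _).mp h)
      have hset : {v : (Tr Δ).V | (Tr Δ).IsLeaf v} =
          Set.range (fun f : Fin Δ → Bool => (some (⟨Δ - 1, by omega⟩, f) : Vt Δ)) := by
        ext v
        constructor
        · intro hv
          obtain ⟨f, rfl⟩ := leaf_eq Δ hD v hv
          exact ⟨f, rfl⟩
        · rintro ⟨f, rfl⟩ u hu
          exact par_ne_leaf Δ hD f u hu
      rw [hset]
      exact (Nat.card_coe_set_eq _).symm.trans ((Nat.card_range_of_injective hinj).trans
        (by simp [Nat.card_eq_fintype_card]))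
    · have hΔ0 : Δ = 0 := by omega
      have hall : ∀ w : Vt Δ, w = none := by
        intro w
        match w with
        | none => rfl
        | some (k, _) => exact absurd k.isLt (by omega)
      have hset : {v : (Tr Δ).V | (Tr Δ).IsLeaf v} = {(none : Vt Δ)} := by
        ext v
        constructor
        · intro _
          exact hall v
        · intro hveq u hu
          exact absurd (hall u) hu
      rw [hset]; exact (Set.ncard_singleton (none : Vt Δ)).trans (by rw [hΔ0, pow_zero])
  · -- (d)
    have hset : {v : (Tr Δ).V | v ≠ (Tr Δ).root} =
        Set.range (fun p : Fin Δ × (Fin Δ → Bool) => (some p : Vt Δ)) := by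
      ext v
      simp only [Set.mem_setOf_eq, Set.mem_range]
      exact Option.ne_none_iff_exists
    rw [hset]
    exact (Nat.card_coe_set_eq _).symm.trans
      ((Nat.card_range_of_injective (fun a b h => (Option.some.injEq _ _).mp h)).trans
      (by simp [Nat.card_eq_fintype_card, Fintype.card_fun]))
end

section
/- Canonical order existence: Let G be a graph, s, t vertices, and for every edge set F' fix a shortest s–t path π(s,t | F') in G−F' with stable tiebreaking (if e ∉ π(s,t|F') then π(s,t | F' ∪ {e}) = π(s,t|F')). Suppose F is a minimal fault set for (s,t), meaning π(s,t | F') ≠ π(s,t | F) for every proper subset F' ⊊ F. Then there is an ordering e_1, …, e_{|F|} of F such that for every 1 ≤ i ≤ |F|, the edge e_i lies on the path π(s,t | {e_1, …, e_{i−1}}). -/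
/-- `IsWalkFrom a l b`: the list of edges `l` forms a walk from `a` to `b`. -/
def IsWalkFrom {V : Type*} : V → List (V × V) → V → Prop
  | a, [], b => a = b
  | a, e :: l, b => e.1 = a ∧ IsWalkFrom e.2 l b

private lemma stable_union {V : Type*} [DecidableEq V]
    (π : Finset (V × V) → List (V × V))
    (hstable : ∀ (F : Finset (V × V)) (e : V × V), e ∉ π F → π (insert e F) = π F)
    (S : Finset (V × V)) (h : ∀ e ∈ S, e ∉ π ∅) : π S = π ∅ := by
  induction S using Finset.induction_on with
  | empty => rfl
  | @insert a S hnot ih =>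
    have hS : π S = π ∅ := ih (fun e he => h e (Finset.mem_insert_of_mem he))
    have : a ∉ π S := by rw [hS]; exact h a (Finset.mem_insert_self a S)
    rw [hstable S a this, hS]

private lemma canonical_order_aux {V : Type*} [DecidableEq V] :
    ∀ (n : ℕ) (π : Finset (V × V) → List (V × V)),
    (∀ (F : Finset (V × V)) (e : V × V), e ∉ π F → π (insert e F) = π F) →
    ∀ F : Finset (V × V), F.card = n →
    (∀ F' : Finset (V × V), F' ⊂ F → π F' ≠ π F) →
    ∃ L : List (V × V), L.Nodup ∧ L.toFinset = F ∧
      ∀ (i : ℕ) (h : i < L.length), L.get ⟨i, h⟩ ∈ π (L.take i).toFinset := by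
  intro n
  induction n with
  | zero =>
    intro π _ F hcard _
    refine ⟨[], by simp, ?_, by simp⟩
    simp [Finset.card_eq_zero.mp hcard]
  | succ n ih =>
    intro π hstable F hcard hmin
    have hne : F ≠ ∅ := by
      intro h; rw [h] at hcard; simp at hcard
    -- there exists e ∈ F with e ∈ π ∅
    have hex : ∃ e ∈ F, e ∈ π ∅ := by
      by_contra hc
      push_neg at hc
      have := stable_union π hstable F hc
      exact hmin ∅ (Finset.empty_ssubset.mpr (Finset.nonempty_iff_ne_empty.mpr hne)) this.symm
    obtain ⟨e, heF, heπ⟩ := hex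
    set π' : Finset (V × V) → List (V × V) := fun F' => π (insert e F') with hπ'
    have hstable' : ∀ (F' : Finset (V × V)) (a : V × V), a ∉ π' F' →
        π' (insert a F') = π' F' := by
      intro F' a ha
      show π (insert e (insert a F')) = π (insert e F')
      rw [Finset.insert_comm]
      exact hstable (insert e F') a ha
    have hins : insert e (F.erase e) = F := Finset.insert_erase heF
    have hmin' : ∀ F' : Finset (V × V), F' ⊂ F.erase e → π' F' ≠ π' (F.erase e) := by
      intro F' hsub
      show π (insert e F') ≠ π (insert e (F.erase e))
      rw [hins]
      apply hmin
      constructor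
      · intro x hx
        rcases Finset.mem_insert.mp hx with h | h
        · rw [h]; exact heF
        · exact Finset.mem_of_mem_erase (hsub.1 h)
      · intro hle
        obtain ⟨x, hx1, hx2⟩ := Finset.exists_of_ssubset hsub
        have hxF : x ∈ F := Finset.mem_of_mem_erase hx1
        have hxne : x ≠ e := Finset.ne_of_mem_erase hx1
        have := hle hxF
        rcases Finset.mem_insert.mp this with h | h
        · exact hxne h
        · exact hx2 h
    have hcard' : (F.erase e).card = n := by
      rw [Finset.card_erase_of_mem heF, hcard]; rfl
    obtain ⟨L', hnd, htf, hget⟩ := ih π' hstable' (F.erase e) hcard' hmin'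
    have heL' : e ∉ L' := by
      intro h
      have : e ∈ F.erase e := htf ▸ List.mem_toFinset.mpr h
      exact (Finset.notMem_erase e F) this
    refine ⟨e :: L', List.nodup_cons.mpr ⟨heL', hnd⟩, ?_, ?_⟩
    · rw [List.toFinset_cons, htf, hins]
    · intro i h
      match i with
      | 0 => simpa using heπ
      | (j+1) =>
        have hj : j < L'.length := by simpa using h
        have := hget j hj
        simpa [hπ', List.take_succ_cons] using this

/-- canonical order existence: if `π F'` is a chosen shortest `s`–`t`
path in `G − F'` with stable tiebreaking, and `F` is minimal (no proper subset yields
the same chosen path), then `F` can be ordered `e_1, …, e_{|F|}` so that each `e_i` lies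
on `π {e_1, …, e_{i−1}}`. -/
theorem canonical_order_exists {V : Type*} [DecidableEq V]
    (G : Set (V × V)) (s t : V)
    (π : Finset (V × V) → List (V × V))
    (hwalk : ∀ F : Finset (V × V), IsWalkFrom s (π F) t ∧ ∀ e ∈ π F, e ∈ G ∧ e ∉ F)
    (hshort : ∀ (F : Finset (V × V)) (l : List (V × V)),
      IsWalkFrom s l t → (∀ e ∈ l, e ∈ G ∧ e ∉ F) → (π F).length ≤ l.length)
    (hstable : ∀ (F : Finset (V × V)) (e : V × V), e ∉ π F → π (insert e F) = π F)
    (F : Finset (V × V))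
    (hmin : ∀ F' : Finset (V × V), F' ⊂ F → π F' ≠ π F) :
    ∃ L : List (V × V), L.Nodup ∧ L.toFinset = F ∧
      ∀ (i : ℕ) (h : i < L.length), L.get ⟨i, h⟩ ∈ π (L.take i).toFinset := by
  exact canonical_order_aux F.card π hstable F rfl hmin
end

section
/- Unique shortest path forcing: Let T be an edge-colored tree rooted at s with leaf set X, such that for a leaf x and color c_x, x is the unique leaf of minimal depth among leaves connected to s in T − c_x. Let G be obtained from T by adding a disjoint vertex set Y and all uncolored edges between X and Y. Then for every y ∈ Y, every shortest s–y path in G − c_x passes through x and uses the edge (x,y); consequently any subgraph H ⊆ G with dist_H(s,y | c_x) = dist_G(s,y | c_x) must contain the edge (x,y). -/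
namespace RCTree

variable {C : Type} (T : RCTree C)

/-- The (undirected) edges of the graph `G` obtained from `T` by adding a vertex set `Y`
and all edges between the leaves of `T` and `Y`. -/
def gEdge (Y : Type) : Set ((T.V ⊕ Y) × (T.V ⊕ Y)) :=
  {p | (∃ u v : T.V,
          ((p.1 = Sum.inl u ∧ p.2 = Sum.inl v) ∨ (p.1 = Sum.inl v ∧ p.2 = Sum.inl u)) ∧
          T.parent v = u ∧ v ≠ T.root) ∨
       (∃ (u : T.V) (y : Y), T.IsLeaf u ∧
          ((p.1 = Sum.inl u ∧ p.2 = Sum.inr y) ∨ (p.1 = Sum.inr y ∧ p.2 = Sum.inl u)))}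

/-- The edge `p` of `G` carries color `c` (only tree edges are colored). -/
def HasColor (Y : Type) (c : C) (p : (T.V ⊕ Y) × (T.V ⊕ Y)) : Prop :=
  ∃ u v : T.V,
    ((p.1 = Sum.inl u ∧ p.2 = Sum.inl v) ∨ (p.1 = Sum.inl v ∧ p.2 = Sum.inl u)) ∧
    T.parent v = u ∧ v ≠ T.root ∧ T.col v = some c

end RCTree

/-- Shortest-walk distance (number of edges) using only edges from `E`. -/
noncomputable def walkDist {V : Type*} (E : Set (V × V)) (a b : V) : ℕ∞ :=
  sInf {n : ℕ∞ | ∃ l : List (V × V),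
    IsWalkFrom a l b ∧ (∀ e ∈ l, e ∈ E) ∧ n = (l.length : ℕ∞)}

section Aux

namespace RCTree

variable {C : Type} {T : RCTree C}

lemma survives_root (cx : C) : T.Survives cx T.root := by
  intro k hk
  rw [T.depth_root] at hk
  omega

lemma survives_parent {cx : C} {v : T.V} (hv : T.Survives cx v) (hr : v ≠ T.root) :
    T.Survives cx (T.parent v) := by
  intro k hk
  have hd := T.depth_parent v hr
  have h := hv (k + 1) (by omega)
  rwa [Function.iterate_succ_apply] at h

lemma survives_child {cx : C} {v : T.V} (hv : T.Survives cx (T.parent v)) (hr : v ≠ T.root)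
    (hc : T.col v ≠ some cx) : T.Survives cx v := by
  intro k hk
  cases k with
  | zero => simpa using hc
  | succ j =>
    have hd := T.depth_parent v hr
    rw [Function.iterate_succ_apply]
    exact hv j (by omega)

/-- Case analysis for a surviving edge of `G` starting at a tree vertex. -/
lemma gEdge_cases {Y : Type} {cx : C} {v : T.V} {b : T.V ⊕ Y}
    (he : (Sum.inl v, b) ∈ T.gEdge Y) (hc : ¬ T.HasColor Y cx (Sum.inl v, b)) :
    (∃ w : T.V, b = Sum.inl w ∧ T.depth w ≤ T.depth v + 1 ∧
        (T.Survives cx v → T.Survives cx w)) ∨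
    (∃ y : Y, b = Sum.inr y ∧ T.IsLeaf v) := by
  rcases he with ⟨u, w, hor, hpw, hwr⟩ | ⟨u, y, hleaf, hor⟩
  · left
    rcases hor with ⟨h1, h2⟩ | ⟨h1, h2⟩
    · -- v = u, b = inl w, parent w = v
      have huv : v = u := Sum.inl_injective h1
      rw [huv]
      refine ⟨w, h2, ?_, ?_⟩
      · have := T.depth_parent w hwr
        rw [hpw] at this
        omega
      · intro hu
        apply survives_child (hpw ▸ hu) hwr
        intro hcol
        exact hc ⟨u, w, Or.inl ⟨h1, h2⟩, hpw, hwr, hcol⟩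
    · -- v = w, b = inl u, parent v = u
      have hwv : v = w := Sum.inl_injective h1
      rw [hwv]
      refine ⟨u, h2, ?_, ?_⟩
      · have := T.depth_parent w hwr
        rw [hpw] at this
        omega
      · intro hw
        exact hpw ▸ survives_parent hw hwr
  · right
    rcases hor with ⟨h1, h2⟩ | ⟨h1, h2⟩
    · have huv : v = u := Sum.inl_injective h1
      rw [huv]
      exact ⟨y, h2, hleaf⟩
    · exact absurd h1 (by simp)

lemma gEdge_inr {Y : Type} {y : Y} {b : T.V ⊕ Y}
    (he : (Sum.inr y, b) ∈ T.gEdge Y) : ∃ u : T.V, b = Sum.inl u := by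
  rcases he with ⟨u, w, hor, _, _⟩ | ⟨u, y', _, hor⟩
  · rcases hor with ⟨h1, _⟩ | ⟨h1, _⟩ <;> exact absurd h1 (by simp)
  · rcases hor with ⟨h1, _⟩ | ⟨_, h2⟩
    · exact absurd h1 (by simp)
    · exact ⟨u, h2⟩

end RCTree

lemma isWalkFrom_append {V : Type*} {a b c : V} {l1 l2 : List (V × V)}
    (h1 : IsWalkFrom a l1 b) (h2 : IsWalkFrom b l2 c) : IsWalkFrom a (l1 ++ l2) c := by
  induction l1 generalizing a with
  | nil => cases h1; exact h2
  | cons e t ih => exact ⟨h1.1, ih h1.2⟩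

end Aux

section Aux2

namespace RCTree

variable {C : Type} {T : RCTree C}

/-- A surviving vertex can be reached from the root by a surviving walk of length `depth v`. -/
lemma exists_tree_walk (Y : Type) (cx : C) :
    ∀ (n : ℕ) (v : T.V), T.depth v = n → T.Survives cx v →
    ∃ l : List ((T.V ⊕ Y) × (T.V ⊕ Y)),
      IsWalkFrom (Sum.inl T.root) l (Sum.inl v) ∧
      (∀ e ∈ l, e ∈ T.gEdge Y ∧ ¬ T.HasColor Y cx e) ∧ l.length = n := by
  intro n
  induction n with
  | zero =>
    intro v hd _
    have : v = T.root := T.depth_eq_zero v hd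
    subst this
    exact ⟨[], rfl, by simp, rfl⟩
  | succ m ih =>
    intro v hd hv
    have hvr : v ≠ T.root := by
      intro h; rw [h, T.depth_root] at hd; omega
    have hdp : T.depth (T.parent v) = m := by
      have := T.depth_parent v hvr; omega
    obtain ⟨l, hw, hE, hlen⟩ := ih (T.parent v) hdp (survives_parent hv hvr)
    refine ⟨l ++ [(Sum.inl (T.parent v), Sum.inl v)], ?_, ?_, by simp [hlen]⟩
    · exact isWalkFrom_append hw ⟨rfl, rfl⟩
    · intro e hme
      rcases List.mem_append.mp hme with h | h
      · exact hE e h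
      · simp only [List.mem_singleton] at h
        subst h
        constructor
        · exact Or.inl ⟨T.parent v, v, Or.inl ⟨rfl, rfl⟩, rfl, hvr⟩
        · rintro ⟨u', v', hor, hp', hr', hcol'⟩
          rcases hor with ⟨h1, h2⟩ | ⟨h1, h2⟩
          · have : v' = v := Sum.inl_injective h2.symm
            subst this
            have h0 := hv 0 (by omega)
            simp at h0
            exact h0 hcol'
          · have hv' : v' = T.parent v := Sum.inl_injective h1.symm
            have hu' : u' = v := Sum.inl_injective h2.symm
            rw [hv', hu'] at hp'
            rw [hv'] at hr'
            have d1 := T.depth_parent v hvr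
            have d2 := T.depth_parent (T.parent v) hr'
            rw [hp'] at d2
            omega

/-- Main induction: lower bound on walk length and structure of tight walks. -/
lemma main_bound {Y : Type} {cx : C} {x : T.V}
    (hxmin : ∀ v : T.V, T.IsLeaf v → v ≠ x → T.Survives cx v → T.depth x < T.depth v) :
    ∀ (l : List ((T.V ⊕ Y) × (T.V ⊕ Y))) (v : T.V) (y : Y), T.Survives cx v →
      IsWalkFrom (Sum.inl v) l (Sum.inr y) →
      (∀ e ∈ l, e ∈ T.gEdge Y ∧ ¬ T.HasColor Y cx e) →
      T.depth x + 1 ≤ l.length + T.depth v ∧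
      (l.length + T.depth v = T.depth x + 1 → ∃ p, l = p ++ [(Sum.inl x, Sum.inr y)]) := by
  intro l
  induction l with
  | nil => intro v y _ hw _; exact absurd hw (by simp [IsWalkFrom])
  | cons e l' ih =>
    intro v y hv hw hE
    obtain ⟨he1, hw'⟩ := hw
    obtain ⟨a, b⟩ := e
    simp only at he1
    subst he1
    obtain ⟨heG, heC⟩ := hE _ List.mem_cons_self
    rcases RCTree.gEdge_cases heG heC with ⟨w, hb, hdw, hsw⟩ | ⟨y1, hb, hvleaf⟩
    · -- tree edge to w
      subst hb
      have := ih w y (hsw hv) hw' (fun e he => hE e (List.mem_cons_of_mem _ he))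
      refine ⟨by simp only [List.length_cons]; omega, ?_⟩
      intro heq
      simp only [List.length_cons] at heq
      have heq' : l'.length + T.depth w = T.depth x + 1 := by omega
      obtain ⟨p, hp⟩ := this.2 heq'
      exact ⟨(Sum.inl v, Sum.inl w) :: p, by simp [hp]⟩
    · -- crossing edge to y1
      subst hb
      have hdvx : T.depth x ≤ T.depth v := by
        by_cases hvx : v = x
        · subst hvx; exact le_refl _
        · exact le_of_lt (hxmin v hvleaf hvx hv)
      cases l' with
      | nil =>
        have hy : y1 = y := by
          simpa [IsWalkFrom] using hw'
        subst hy
        refine ⟨by simp; omega, ?_⟩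
        intro heq
        simp only [List.length_cons, List.length_nil] at heq
        have : T.depth v = T.depth x := by omega
        have hvx : v = x := by
          by_contra hne
          exact absurd this (by have := hxmin v hvleaf hne hv; omega)
        subst hvx
        exact ⟨[], rfl⟩
      | cons e' l'' =>
        obtain ⟨he'1, hw''⟩ := hw'
        obtain ⟨a', b'⟩ := e'
        simp only at he'1
        subst he'1
        obtain ⟨he'G, _⟩ := hE _ (List.mem_cons_of_mem _ List.mem_cons_self)
        obtain ⟨u', hb'⟩ := RCTree.gEdge_inr he'G
        subst hb'
        have hne : l'' ≠ [] := by
          intro h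
          subst h
          exact absurd hw'' (by simp [IsWalkFrom])
        have hlen : 1 ≤ l''.length := by
          cases l'' with
          | nil => exact absurd rfl hne
          | cons _ _ => simp
        constructor
        · simp only [List.length_cons]; omega
        · intro heq
          simp only [List.length_cons] at heq
          omega

end RCTree

end Aux2

/-- unique shortest path forcing: if `x` is the unique leaf of minimal
depth that survives the color fault `c_x` in the tree `T`, and `G` is obtained from `T`
by adding a vertex set `Y` joined to all leaves by uncolored edges, then every shortest
`root`–`y` walk in `G − c_x` ends with the edge `(x, y)`; consequently every subgraph
`H ⊆ G` with `dist_H(root, y | c_x) = dist_G(root, y | c_x)` contains the edge `(x,y)`. -/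
theorem unique_shortest_path_forcing {C : Type} (T : RCTree C) (Y : Type)
    (x : T.V) (cx : C)
    (hxleaf : T.IsLeaf x) (hxsurv : T.Survives cx x)
    (hxmin : ∀ v : T.V, T.IsLeaf v → v ≠ x → T.Survives cx v → T.depth x < T.depth v) :
    ∀ y : Y,
      (∀ l : List ((T.V ⊕ Y) × (T.V ⊕ Y)),
        IsWalkFrom (Sum.inl T.root) l (Sum.inr y) →
        (∀ e ∈ l, e ∈ T.gEdge Y ∧ ¬ T.HasColor Y cx e) →
        (l.length : ℕ∞)
          = walkDist {e ∈ T.gEdge Y | ¬ T.HasColor Y cx e} (Sum.inl T.root) (Sum.inr y) →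
        ∃ p, l = p ++ [(Sum.inl x, Sum.inr y)]) ∧
      (∀ H : Set ((T.V ⊕ Y) × (T.V ⊕ Y)), H ⊆ T.gEdge Y →
        walkDist {e ∈ H | ¬ T.HasColor Y cx e} (Sum.inl T.root) (Sum.inr y)
          = walkDist {e ∈ T.gEdge Y | ¬ T.HasColor Y cx e} (Sum.inl T.root) (Sum.inr y) →
        (Sum.inl x, Sum.inr y) ∈ H) := by
  intro y
  have hdist : walkDist {e ∈ T.gEdge Y | ¬ T.HasColor Y cx e} (Sum.inl T.root) (Sum.inr y)
      = ((T.depth x + 1 : ℕ) : ℕ∞) := by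
    apply le_antisymm
    · obtain ⟨l, hw, hEdges, hlen⟩ :=
        RCTree.exists_tree_walk (T := T) Y cx (T.depth x) x rfl hxsurv
      apply sInf_le
      refine ⟨l ++ [(Sum.inl x, Sum.inr y)], isWalkFrom_append hw ⟨rfl, rfl⟩, ?_, by simp [hlen]⟩
      intro e he
      rcases List.mem_append.mp he with h | h
      · exact hEdges e h
      · simp only [List.mem_singleton] at h
        subst h
        refine ⟨Or.inr ⟨x, y, hxleaf, Or.inl ⟨rfl, rfl⟩⟩, ?_⟩
        rintro ⟨u', v', hor, _, _, _⟩
        rcases hor with ⟨h1, h2⟩ | ⟨h1, h2⟩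
        · exact absurd h2 (by simp)
        · exact absurd h2 (by simp)
    · apply le_sInf
      rintro b ⟨l, hw, hEdges, rfl⟩
      have := RCTree.main_bound hxmin l T.root y (RCTree.survives_root cx) hw
        (fun e he => hEdges e he)
      have h1 := this.1
      rw [T.depth_root] at h1
      exact_mod_cast h1
  constructor
  · intro l hw hEdges hlen
    rw [hdist, Nat.cast_inj] at hlen
    have := RCTree.main_bound hxmin l T.root y (RCTree.survives_root cx) hw hEdges
    exact this.2 (by rw [T.depth_root]; omega)
  · intro H hHsub hHdist
    rw [hdist] at hHdist
    have hlt : walkDist {e ∈ H | ¬ T.HasColor Y cx e} (Sum.inl T.root) (Sum.inr y)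
        < ((T.depth x + 2 : ℕ) : ℕ∞) := by
      rw [hHdist]
      exact_mod_cast Nat.lt_succ_self _
    unfold walkDist at hlt hHdist
    obtain ⟨b, hbS, hblt⟩ := sInf_lt_iff.mp hlt
    have hge : ((T.depth x + 1 : ℕ) : ℕ∞) ≤ b := hHdist ▸ sInf_le hbS
    obtain ⟨l, hw, hEdges, rfl⟩ := hbS
    have hge' : T.depth x + 1 ≤ l.length := by exact_mod_cast hge
    have hlt' : l.length < T.depth x + 2 := by exact_mod_cast hblt
    have hEdges' : ∀ e ∈ l, e ∈ T.gEdge Y ∧ ¬ T.HasColor Y cx e :=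
      fun e he => ⟨hHsub (hEdges e he).1, (hEdges e he).2⟩
    have := RCTree.main_bound hxmin l T.root y (RCTree.survives_root cx) hw hEdges'
    obtain ⟨p, hp⟩ := this.2 (by rw [T.depth_root]; omega)
    have hmem : (Sum.inl x, Sum.inr y) ∈ l := by
      rw [hp]
      exact List.mem_append_right _ (List.mem_singleton_self _)
    exact (hEdges _ hmem).1
end
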